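/- Let G be a finite group and let x ∈ G have prime order p. If the cardinality of nil_G(x) is at most p², then nil_G(x) = C_G(x), the centralizer of x in G. -/

import Mathlib

/-- The nilpotentizer of `x` in `G`: the set of `y` such that `⟨x, y⟩` is nilpotent. -/
def nilpotentizer {G : Type*} [Group G] (x : G) : Set G :=
  {y | Group.IsNilpotent (Subgroup.closure ({x, y} : Set G))}

/-- In a finite nilpotent group of order at most `p ^ 2`, an element of order `p` is central. -/
lemma aux_central {K : Type*} [Group K] [Finite K] (hnil : Group.IsNilpotent K) {p : ℕ}
    (hp : p.Prime) (a : K) (ha : orderOf a = p) (hcard : Nat.card K ≤ p ^ 2) :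
    ∀ b : K, Commute a b := by
  haveI : Fact p.Prime := ⟨hp⟩
  have hn0 : Nat.card K ≠ 0 := Nat.card_pos.ne'
  have hpn : p ∣ Nat.card K := ha ▸ orderOf_dvd_natCard a
  by_cases h2 : p ^ 2 ∣ Nat.card K
  · have hc : Nat.card K = p ^ 2 :=
      le_antisymm hcard (Nat.le_of_dvd Nat.card_pos h2)
    intro b
    exact IsPGroup.commutative_of_card_eq_prime_sq hc a b
  · -- the `p`-part of `|K|` is exactly `p`
    have hfac : (Nat.card K).factorization p = 1 := by
      have h1 : 1 ≤ (Nat.card K).factorization p :=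
        (Nat.Prime.pow_dvd_iff_le_factorization hp hn0).mp (by simpa using hpn)
      have h2' : ¬ 2 ≤ (Nat.card K).factorization p := fun h =>
        h2 ((Nat.Prime.pow_dvd_iff_le_factorization hp hn0).mpr h)
      omega
    -- the Sylow p-subgroup is `zpowers a`
    have hza : IsPGroup p (Subgroup.zpowers a) := by
      apply IsPGroup.of_card (n := 1)
      rw [Nat.card_zpowers, ha, pow_one]
    obtain ⟨Q, hQ⟩ := hza.exists_le_sylow
    have hQcard : Nat.card Q = p := by
      rw [Sylow.card_eq_multiplicity, hfac, pow_one]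
    have hzQ : Subgroup.zpowers a = (Q : Subgroup K) := by
      apply Subgroup.eq_of_le_of_card_ge hQ
      rw [hQcard, Nat.card_zpowers, ha]
    have hnormal : ∀ (q : ℕ) (_ : Fact q.Prime) (P : Sylow q K), (P : Subgroup K).Normal :=
      (isNilpotent_of_finite_tfae.out 0 3).mp hnil
    -- the centralizer of `a` contains a Sylow subgroup for each prime
    set C := Subgroup.centralizer ({a} : Set K) with hC
    have hCcard0 : Nat.card C ≠ 0 := Nat.card_pos.ne'
    have hdvd : Nat.card K ∣ Nat.card C := by
      rw [← Nat.factorization_le_iff_dvd hn0 hCcard0]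
      intro q
      by_cases hq0 : (Nat.card K).factorization q = 0
      · simp [hq0]
      · have hqp : q.Prime := Nat.prime_of_mem_primeFactors
          (Nat.support_factorization _ ▸ Finsupp.mem_support_iff.mpr hq0)
        haveI : Fact q.Prime := ⟨hqp⟩
        obtain ⟨R⟩ : Nonempty (Sylow q K) := inferInstance
        have hRle : (R : Subgroup K) ≤ C := by
          by_cases hqeq : q = p
          · subst hqeq
            haveI := Sylow.unique_of_normal Q (hnormal q ‹_› Q)
            have : R = Q := Subsingleton.elim R Q
            rw [this, ← hzQ]
            rintro z ⟨k, rfl⟩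
            rw [hC, Subgroup.mem_centralizer_iff]
            rintro g rfl
            exact ((Commute.refl g).zpow_right k).eq
          · have hdisj : Disjoint (Q : Subgroup K) (R : Subgroup K) :=
              IsPGroup.disjoint_of_ne p q (Ne.symm hqeq) _ _ Q.isPGroup' R.isPGroup'
            have hcomm := Subgroup.commute_of_normal_of_disjoint _ _
              (hnormal p ‹_› Q) (hnormal q ‹_› R) hdisj
            intro z hz
            rw [hC, Subgroup.mem_centralizer_iff]
            rintro g rfl
            exact (hcomm g z (by rw [← hzQ]; exact Subgroup.mem_zpowers g) hz).eq
        have hpow : (q : ℕ) ^ (Nat.card K).factorization q ∣ Nat.card C := by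
          have := Subgroup.card_dvd_of_le hRle
          rwa [Sylow.card_eq_multiplicity] at this
        exact (Nat.Prime.pow_dvd_iff_le_factorization hqp hCcard0).mp hpow
    have hCtop : C = ⊤ := by
      apply Subgroup.eq_of_le_of_card_ge le_top
      rw [Subgroup.card_top]
      exact Nat.le_of_dvd Nat.card_pos hdvd
    intro b
    have hb : b ∈ C := hCtop ▸ Subgroup.mem_top b
    exact (Subgroup.mem_centralizer_iff.mp hb a rfl)

theorem stmt_14 {G : Type*} [Group G] [Finite G] (x : G) (p : ℕ) (hp : p.Prime)
    (ho : orderOf x = p) (hcard : Nat.card (nilpotentizer x) ≤ p ^ 2) :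
    nilpotentizer x = ((Subgroup.centralizer {x} : Subgroup G) : Set G) := by
  ext y
  constructor
  · intro hy
    have hy' : Group.IsNilpotent (Subgroup.closure ({x, y} : Set G)) := hy
    set H := Subgroup.closure ({x, y} : Set G) with hH
    have hxH : x ∈ H := Subgroup.subset_closure (Set.mem_insert _ _)
    have hyH : y ∈ H := Subgroup.subset_closure (Set.mem_insert_of_mem _ rfl)
    -- H is contained in the nilpotentizer
    have hsub : (H : Set G) ⊆ nilpotentizer x := by
      intro z hz
      have hle : Subgroup.closure ({x, z} : Set G) ≤ H := by
        apply Subgroup.closure_le _ |>.mpr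
        rintro g (rfl | rfl)
        exacts [hxH, hz]
      haveI : Group.IsNilpotent H := hy'
      haveI : Group.IsNilpotent ((Subgroup.closure ({x, z} : Set G)).subgroupOf H) :=
        Subgroup.isNilpotent _
      exact nilpotent_of_mulEquiv (Subgroup.subgroupOfEquivOfLe hle)
    have hcardH : Nat.card H ≤ p ^ 2 := by
      refine le_trans ?_ hcard
      exact Nat.card_le_card_of_injective (Set.inclusion hsub) (Set.inclusion_injective hsub)
    have hcomm := aux_central hy' hp ⟨x, hxH⟩ ((Subgroup.orderOf_mk x hxH).trans ho)
      hcardH ⟨y, hyH⟩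
    have : x * y = y * x := congrArg Subtype.val hcomm.eq
    rw [SetLike.mem_coe, Subgroup.mem_centralizer_iff]
    rintro g rfl
    exact this
  · intro hy
    have hxy : x * y = y * x := Subgroup.mem_centralizer_iff.mp hy x rfl
    show Group.IsNilpotent (Subgroup.closure ({x, y} : Set G))
    have hle : Subgroup.closure ({x, y} : Set G) ≤ Subgroup.centralizer ({x, y} : Set G) := by
      apply Subgroup.closure_le _ |>.mpr
      rintro g (rfl | rfl) <;> rw [SetLike.mem_coe, Subgroup.mem_centralizer_iff] <;>
        rintro h (rfl | rfl)
      · rfl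
      · exact hxy.symm
      · exact hxy
      · rfl
    have hcomm : ∀ a b : Subgroup.closure ({x, y} : Set G), a * b = b * a := by
      rintro ⟨a, haa⟩ ⟨b, hbb⟩
      have hb := Subgroup.mem_centralizer_iff.mp (hle hbb)
      have hle2 : Subgroup.closure ({x, y} : Set G) ≤ Subgroup.centralizer ({b} : Set G) := by
        apply Subgroup.closure_le _ |>.mpr
        rintro g hg
        rw [SetLike.mem_coe, Subgroup.mem_centralizer_iff]
        rintro h rfl
        exact (hb g hg).symm
      have := Subgroup.mem_centralizer_iff.mp (hle2 haa) b rfl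
      exact Subtype.ext this.symm
    letI : CommGroup (Subgroup.closure ({x, y} : Set G)) :=
      { (inferInstance : Group (Subgroup.closure ({x, y} : Set G))) with
        mul_comm := hcomm }
    infer_instance
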